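/- Let Π_m be the interpolation projection and 𝓛 an operator on Lipschitz functions on [0,1] satisfying Lip(𝓛 f) ≤ α Lip(f) + B₁|f|_∞ and |𝓛 f|_∞ ≤ M |f|_∞. Define 𝓛_m = Π_m 𝓛 Π_m with mesh ε = 1/m. Then for every Lipschitz f, |(𝓛 − 𝓛_m) f|_∞ ≤ 2ε[(α + M) Lip(f) + B₁ |f|_∞] ≤ Γ ε ‖f‖, where Γ = 2 max{α + M, B₁} and ‖f‖ = Lip(f) + |f|_∞. -/

import Mathlib

/-- The Lipschitz constant of `f` on `[0,1]`. -/
noncomputable def lipC (f : ℝ → ℝ) : ℝ :=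
  sInf {K : ℝ | 0 ≤ K ∧ ∀ x ∈ Set.Icc (0:ℝ) 1, ∀ y ∈ Set.Icc (0:ℝ) 1,
    |f x - f y| ≤ K * |x - y|}

/-- The sup norm of `f` on `[0,1]`. -/
noncomputable def supN (f : ℝ → ℝ) : ℝ :=
  sSup {C : ℝ | ∃ x ∈ Set.Icc (0:ℝ) 1, C = |f x|}

/-- `f` is Lipschitz on `[0,1]`. -/
def IsLip (f : ℝ → ℝ) : Prop :=
  ∃ K : NNReal, LipschitzOnWith K f (Set.Icc (0:ℝ) 1)

/-- The standard hat function `ψ_i` over the uniform partition `{i/m}` of `[0,1]`. -/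
noncomputable def hat (m i : ℕ) (x : ℝ) : ℝ := max 0 (1 - |(m : ℝ) * x - (i : ℝ)|)

/-- Piecewise linear interpolation of `f` at the nodes `i/m`. -/
noncomputable def piInterp (m : ℕ) (f : ℝ → ℝ) (x : ℝ) : ℝ :=
  ∑ i ∈ Finset.range (m + 1), f ((i : ℝ) / (m : ℝ)) * hat m i x

-- lipC spec
lemma aux_lipC_spec (f : ℝ → ℝ) (hf : IsLip f) :
    0 ≤ lipC f ∧ ∀ x ∈ Set.Icc (0:ℝ) 1, ∀ y ∈ Set.Icc (0:ℝ) 1,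
      |f x - f y| ≤ lipC f * |x - y| := by
  have hmem : lipC f ∈ {K : ℝ | 0 ≤ K ∧ ∀ x ∈ Set.Icc (0:ℝ) 1, ∀ y ∈ Set.Icc (0:ℝ) 1,
      |f x - f y| ≤ K * |x - y|} := by
    apply IsClosed.csInf_mem
    · have : {K : ℝ | 0 ≤ K ∧ ∀ x ∈ Set.Icc (0:ℝ) 1, ∀ y ∈ Set.Icc (0:ℝ) 1,
          |f x - f y| ≤ K * |x - y|} =
          Set.Ici (0:ℝ) ∩ ⋂ (x : ℝ) (_ : x ∈ Set.Icc (0:ℝ) 1) (y : ℝ)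
            (_ : y ∈ Set.Icc (0:ℝ) 1), {K : ℝ | |f x - f y| ≤ K * |x - y|} := by
        ext K
        simp only [Set.mem_setOf_eq, Set.mem_inter_iff, Set.mem_Ici, Set.mem_iInter]
      rw [this]
      refine isClosed_Ici.inter ?_
      refine isClosed_biInter fun x _ => isClosed_biInter fun y _ => ?_
      exact isClosed_le continuous_const (continuous_id.mul continuous_const)
    · obtain ⟨K, hK⟩ := hf
      refine ⟨K, K.coe_nonneg, fun x hx y hy => ?_⟩
      have := hK.dist_le_mul x hx y hy
      simpa [Real.dist_eq] using this
    · exact ⟨0, fun K hK => hK.1⟩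
  exact hmem

lemma aux_lipC_le (f : ℝ → ℝ) (K : ℝ) (hK0 : 0 ≤ K)
    (hK : ∀ x ∈ Set.Icc (0:ℝ) 1, ∀ y ∈ Set.Icc (0:ℝ) 1, |f x - f y| ≤ K * |x - y|) :
    lipC f ≤ K :=
  csInf_le ⟨0, fun L hL => hL.1⟩ ⟨hK0, hK⟩

lemma aux_isLip_of (f : ℝ → ℝ) (K : ℝ)
    (hK : ∀ x ∈ Set.Icc (0:ℝ) 1, ∀ y ∈ Set.Icc (0:ℝ) 1, |f x - f y| ≤ K * |x - y|) :
    IsLip f := by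
  refine ⟨K.toNNReal, LipschitzOnWith.of_dist_le_mul fun x hx y hy => ?_⟩
  rw [Real.dist_eq, Real.dist_eq]
  calc |f x - f y| ≤ K * |x - y| := hK x hx y hy
    _ ≤ K.toNNReal * |x - y| := by
        apply mul_le_mul_of_nonneg_right (Real.le_coe_toNNReal K) (abs_nonneg _)

-- supN spec
lemma aux_supN_le (f : ℝ → ℝ) (C : ℝ) (h : ∀ x ∈ Set.Icc (0:ℝ) 1, |f x| ≤ C) :
    supN f ≤ C := by
  have hne : {C : ℝ | ∃ x ∈ Set.Icc (0:ℝ) 1, C = |f x|}.Nonempty :=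
    ⟨|f 0|, ⟨0, by norm_num, rfl⟩⟩
  apply csSup_le hne
  rintro _ ⟨x, hx, rfl⟩
  exact h x hx

lemma aux_le_supN (f : ℝ → ℝ) (hf : IsLip f) (x : ℝ) (hx : x ∈ Set.Icc (0:ℝ) 1) :
    |f x| ≤ supN f := by
  obtain ⟨K, hK⟩ := hf
  apply le_csSup
  · refine ⟨|f 0| + K, ?_⟩
    rintro _ ⟨y, hy, rfl⟩
    have h0 : (0:ℝ) ∈ Set.Icc (0:ℝ) 1 := by norm_num
    have := hK.dist_le_mul y hy 0 h0
    rw [Real.dist_eq, Real.dist_eq] at this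
    have hy1 : |y - 0| ≤ 1 := by
      rw [sub_zero, abs_of_nonneg hy.1]; exact hy.2
    have : |f y - f 0| ≤ K := le_trans this (by nlinarith [K.coe_nonneg])
    calc |f y| ≤ |f y - f 0| + |f 0| := by
          have := abs_sub_abs_le_abs_sub (f y) (f 0); linarith [abs_sub_abs_le_abs_sub (f y) (f 0)]
      _ ≤ |f 0| + K := by linarith
  · exact ⟨x, hx, rfl⟩

lemma aux_supN_nonneg (f : ℝ → ℝ) (hf : IsLip f) : 0 ≤ supN f :=
  le_trans (abs_nonneg _) (aux_le_supN f hf 0 (by norm_num))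

-- node existence
lemma aux_exists_node (m : ℕ) (hm : 1 ≤ m) (x : ℝ) (hx : x ∈ Set.Icc (0:ℝ) 1) :
    ∃ i : ℕ, i + 1 ≤ m ∧ (i:ℝ)/m ≤ x ∧ x ≤ ((i:ℝ)+1)/m := by
  have hm0 : (0:ℝ) < m := by exact_mod_cast hm
  have hx0 : 0 ≤ (m:ℝ) * x := by nlinarith [hx.1]
  set n := ⌊(m:ℝ) * x⌋₊ with hn
  by_cases h : n + 1 ≤ m
  · refine ⟨n, h, ?_, ?_⟩
    · rw [div_le_iff₀ hm0]
      calc (n:ℝ) ≤ (m:ℝ)*x := Nat.floor_le hx0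
        _ = x * m := by ring
    · rw [le_div_iff₀ hm0]
      have := Nat.lt_floor_add_one ((m:ℝ)*x)
      push_cast at this ⊢
      nlinarith
  · push_neg at h
    have hmn : m ≤ n := by omega
    have hnm : (m:ℝ) ≤ n := by exact_mod_cast hmn
    have : (m:ℝ) ≤ (m:ℝ) * x := le_trans hnm (Nat.floor_le hx0)
    have hx1 : x = 1 := le_antisymm hx.2 (by nlinarith)
    have hcast : ((m - 1 : ℕ) : ℝ) = (m:ℝ) - 1 := by
      have h1 : (1:ℕ) ≤ m := hm
      push_cast [h1]; ring
    refine ⟨m - 1, by omega, ?_, ?_⟩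
    · rw [hcast, div_le_iff₀ hm0, hx1]; nlinarith
    · rw [hcast, le_div_iff₀ hm0, hx1]; nlinarith

-- local formula
lemma aux_local (m : ℕ) (f : ℝ → ℝ) (i : ℕ) (hi : i + 1 ≤ m)
    (x : ℝ) (h1 : (i:ℝ)/m ≤ x) (h2 : x ≤ ((i:ℝ)+1)/m) :
    piInterp m f x =
      f ((i:ℝ)/m) * (1 - ((m:ℝ)*x - i)) + f (((i:ℝ)+1)/m) * ((m:ℝ)*x - i) := by
  have hm0 : (0:ℝ) < m := by exact_mod_cast Nat.lt_of_lt_of_le (Nat.succ_le_succ (Nat.zero_le i)) hi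
  set t := (m:ℝ)*x - i with ht
  have ht0 : 0 ≤ t := by
    rw [div_le_iff₀ hm0] at h1; simp [ht]; nlinarith
  have ht1 : t ≤ 1 := by
    rw [le_div_iff₀ hm0] at h2; simp [ht]; nlinarith
  have hsub : ({i, i+1} : Finset ℕ) ⊆ Finset.range (m+1) := by
    intro j hj
    simp only [Finset.mem_insert, Finset.mem_singleton] at hj
    rcases hj with rfl | rfl <;> simp [Finset.mem_range] <;> omega
  rw [piInterp, ← Finset.sum_subset hsub]
  · rw [Finset.sum_pair (by omega : i ≠ i + 1)]
    have hhi : hat m i x = 1 - t := by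
      rw [hat, ← ht, abs_of_nonneg ht0]
      exact max_eq_right (by linarith)
    have hhi1 : hat m (i+1) x = t := by
      rw [hat]
      have : (m:ℝ)*x - ((i+1 : ℕ):ℝ) = t - 1 := by push_cast; ring
      rw [this, abs_of_nonpos (by linarith), ]
      have : 1 - -(t-1) = t := by ring
      rw [this]
      exact max_eq_right ht0
    rw [hhi, hhi1]
    push_cast
    ring
  · intro j hjr hj
    simp only [Finset.mem_insert, Finset.mem_singleton, not_or] at hj
    have : 1 ≤ |(m:ℝ)*x - (j:ℝ)| := by
      rcases lt_or_gt_of_ne hj.1 with hlt | hgt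
      · -- j < i
        have hji : (j:ℝ) + 1 ≤ (i:ℝ) := by exact_mod_cast hlt
        rw [abs_of_nonneg (by simp only [ht] at *; linarith)]
        simp only [ht] at *; linarith
      · -- j > i, j ≠ i+1 so j ≥ i+2
        have hj2 : i + 2 ≤ j := by omega
        have hji : (i:ℝ) + 2 ≤ (j:ℝ) := by exact_mod_cast hj2
        rw [abs_of_nonpos (by nlinarith)]
        nlinarith
    have : hat m j x = 0 := by
      rw [hat]; exact max_eq_left (by linarith)
    rw [this, mul_zero]


-- interpolation error
lemma aux_err (m : ℕ) (hm : 1 ≤ m) (f : ℝ → ℝ) (K : ℝ) (hK0 : 0 ≤ K)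
    (hK : ∀ x ∈ Set.Icc (0:ℝ) 1, ∀ y ∈ Set.Icc (0:ℝ) 1, |f x - f y| ≤ K * |x - y|)
    (x : ℝ) (hx : x ∈ Set.Icc (0:ℝ) 1) :
    |f x - piInterp m f x| ≤ (1/(m:ℝ)) * K := by
  have hm0 : (0:ℝ) < m := by exact_mod_cast hm
  obtain ⟨i, hi, h1, h2⟩ := aux_exists_node m hm x hx
  rw [aux_local m f i hi x h1 h2]
  set t := (m:ℝ)*x - i with ht
  have ht0 : 0 ≤ t := by rw [div_le_iff₀ hm0] at h1; simp only [ht]; nlinarith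
  have ht1 : t ≤ 1 := by rw [le_div_iff₀ hm0] at h2; simp only [ht]; nlinarith
  have hni : (i:ℝ)/m ∈ Set.Icc (0:ℝ) 1 := by
    constructor
    · positivity
    · rw [div_le_one hm0]; exact_mod_cast Nat.le_of_succ_le hi
  have hni1 : ((i:ℝ)+1)/m ∈ Set.Icc (0:ℝ) 1 := by
    constructor
    · positivity
    · rw [div_le_one hm0]; exact_mod_cast hi
  have e1 : |f x - f ((i:ℝ)/m)| ≤ K * |x - (i:ℝ)/m| := hK x hx _ hni
  have e2 : |f x - f (((i:ℝ)+1)/m)| ≤ K * |x - ((i:ℝ)+1)/m| := hK x hx _ hni1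
  have hsum : ((i:ℝ)+1)/m = (i:ℝ)/m + 1/m := by ring
  have d1 : |x - (i:ℝ)/m| ≤ 1/m := by
    rw [abs_of_nonneg (by linarith)]
    rw [hsum] at h2; linarith
  have d2 : |x - ((i:ℝ)+1)/m| ≤ 1/m := by
    rw [abs_of_nonpos (by linarith)]
    rw [hsum] at h2 ⊢; linarith
  have key : f x - (f ((i:ℝ)/m) * (1 - t) + f (((i:ℝ)+1)/m) * t)
      = (f x - f ((i:ℝ)/m)) * (1 - t) + (f x - f (((i:ℝ)+1)/m)) * t := by ring
  rw [key]
  calc |(f x - f ((i:ℝ)/m)) * (1 - t) + (f x - f (((i:ℝ)+1)/m)) * t|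
      ≤ |(f x - f ((i:ℝ)/m)) * (1 - t)| + |(f x - f (((i:ℝ)+1)/m)) * t| := abs_add_le _ _
    _ = |f x - f ((i:ℝ)/m)| * (1 - t) + |f x - f (((i:ℝ)+1)/m)| * t := by
        rw [abs_mul, abs_mul, abs_of_nonneg (by linarith : (0:ℝ) ≤ 1 - t),
          abs_of_nonneg ht0]
    _ ≤ (K * (1/m)) * (1 - t) + (K * (1/m)) * t := by
        have b1 : |f x - f ((i:ℝ)/m)| ≤ K * (1/m) :=
          le_trans e1 (mul_le_mul_of_nonneg_left d1 hK0)
        have b2 : |f x - f (((i:ℝ)+1)/m)| ≤ K * (1/m) :=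
          le_trans e2 (mul_le_mul_of_nonneg_left d2 hK0)
        have hK1m : 0 ≤ K * (1/m) := by positivity
        nlinarith [abs_nonneg (f x - f ((i:ℝ)/m)), abs_nonneg (f x - f (((i:ℝ)+1)/m))]
    _ = (1/(m:ℝ)) * K := by ring

-- sup bound
lemma aux_interp_bound (m : ℕ) (hm : 1 ≤ m) (f : ℝ → ℝ) (C : ℝ)
    (hC : ∀ x ∈ Set.Icc (0:ℝ) 1, |f x| ≤ C)
    (x : ℝ) (hx : x ∈ Set.Icc (0:ℝ) 1) :
    |piInterp m f x| ≤ C := by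
  have hm0 : (0:ℝ) < m := by exact_mod_cast hm
  obtain ⟨i, hi, h1, h2⟩ := aux_exists_node m hm x hx
  rw [aux_local m f i hi x h1 h2]
  set t := (m:ℝ)*x - i with ht
  have ht0 : 0 ≤ t := by rw [div_le_iff₀ hm0] at h1; simp only [ht]; nlinarith
  have ht1 : t ≤ 1 := by rw [le_div_iff₀ hm0] at h2; simp only [ht]; nlinarith
  have hni : (i:ℝ)/m ∈ Set.Icc (0:ℝ) 1 := by
    constructor
    · positivity
    · rw [div_le_one hm0]; exact_mod_cast Nat.le_of_succ_le hi
  have hni1 : ((i:ℝ)+1)/m ∈ Set.Icc (0:ℝ) 1 := by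
    constructor
    · positivity
    · rw [div_le_one hm0]; exact_mod_cast hi
  have b1 := hC _ hni
  have b2 := hC _ hni1
  calc |f ((i:ℝ)/m) * (1 - t) + f (((i:ℝ)+1)/m) * t|
      ≤ |f ((i:ℝ)/m)| * (1 - t) + |f (((i:ℝ)+1)/m)| * t := by
        refine le_trans (abs_add_le _ _) ?_
        rw [abs_mul, abs_mul, abs_of_nonneg (by linarith : (0:ℝ) ≤ 1 - t),
          abs_of_nonneg ht0]
    _ ≤ C * (1 - t) + C * t := by
        nlinarith [abs_nonneg (f ((i:ℝ)/m)), abs_nonneg (f (((i:ℝ)+1)/m))]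
    _ = C := by ring

-- Lipschitz estimate within one cell
lemma aux_cell (m : ℕ) (hm : 1 ≤ m) (f : ℝ → ℝ) (K : ℝ) (hK0 : 0 ≤ K)
    (hK : ∀ x ∈ Set.Icc (0:ℝ) 1, ∀ y ∈ Set.Icc (0:ℝ) 1, |f x - f y| ≤ K * |x - y|)
    (j : ℕ) (hjm : j + 1 ≤ m) (x y : ℝ) (hx : (j:ℝ)/m ≤ x) (hy : y ≤ ((j:ℝ)+1)/m)
    (hxy : x ≤ y) :
    |piInterp m f y - piInterp m f x| ≤ K * (y - x) := by
  have hm0 : (0:ℝ) < m := by exact_mod_cast hm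
  have hfx := aux_local m f j hjm x hx (le_trans hxy hy)
  have hfy := aux_local m f j hjm y (le_trans hx hxy) hy
  rw [hfx, hfy]
  have hd : f ((j:ℝ)/m) * (1 - ((m:ℝ)*y - j)) + f (((j:ℝ)+1)/m) * ((m:ℝ)*y - j)
      - (f ((j:ℝ)/m) * (1 - ((m:ℝ)*x - j)) + f (((j:ℝ)+1)/m) * ((m:ℝ)*x - j))
      = (f (((j:ℝ)+1)/m) - f ((j:ℝ)/m)) * ((m:ℝ) * (y - x)) := by ring
  rw [hd, abs_mul]
  have hni : (j:ℝ)/m ∈ Set.Icc (0:ℝ) 1 := by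
    constructor
    · positivity
    · rw [div_le_one hm0]; exact_mod_cast Nat.le_of_succ_le hjm
  have hni1 : ((j:ℝ)+1)/m ∈ Set.Icc (0:ℝ) 1 := by
    constructor
    · positivity
    · rw [div_le_one hm0]; exact_mod_cast hjm
  have hdist : |((j:ℝ)+1)/m - (j:ℝ)/m| = 1/m := by
    have : ((j:ℝ)+1)/m - (j:ℝ)/m = 1/m := by ring
    rw [this, abs_of_nonneg (by positivity)]
  have hb : |f (((j:ℝ)+1)/m) - f ((j:ℝ)/m)| ≤ K * (1/m) := by
    have := hK _ hni1 _ hni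
    rwa [hdist] at this
  have habs : |(m:ℝ) * (y - x)| = (m:ℝ) * (y - x) :=
    abs_of_nonneg (mul_nonneg hm0.le (by linarith))
  rw [habs]
  calc |f (((j:ℝ)+1)/m) - f ((j:ℝ)/m)| * ((m:ℝ) * (y - x))
      ≤ (K * (1/m)) * ((m:ℝ) * (y - x)) := by
        apply mul_le_mul_of_nonneg_right hb (mul_nonneg hm0.le (by linarith))
    _ = K * (y - x) := by field_simp

-- Lipschitz of the interpolant
lemma aux_interp_lip (m : ℕ) (hm : 1 ≤ m) (f : ℝ → ℝ) (K : ℝ) (hK0 : 0 ≤ K)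
    (hK : ∀ x ∈ Set.Icc (0:ℝ) 1, ∀ y ∈ Set.Icc (0:ℝ) 1, |f x - f y| ≤ K * |x - y|) :
    ∀ x ∈ Set.Icc (0:ℝ) 1, ∀ y ∈ Set.Icc (0:ℝ) 1,
      |piInterp m f x - piInterp m f y| ≤ K * |x - y| := by
  have hm0 : (0:ℝ) < m := by exact_mod_cast hm
  -- main claim by induction on j
  have claim : ∀ j : ℕ, j ≤ m → ∀ x y : ℝ, x ∈ Set.Icc (0:ℝ) 1 →
      0 ≤ y → y ≤ (j:ℝ)/m → x ≤ y →
      |piInterp m f y - piInterp m f x| ≤ K * (y - x) := by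
    intro j
    induction j with
    | zero =>
      intro _ x y hx hy0 hyj hxy
      have : y = 0 := le_antisymm (by simpa using hyj) hy0
      have : x = 0 := le_antisymm (this ▸ hxy) hx.1
      simp [this, ‹y = 0›]
    | succ j ih =>
      intro hjm x y hx hy0 hyj hxy
      have hjm' : j ≤ m := by omega
      have hy1 : y ≤ 1 := by
        refine le_trans hyj ?_
        rw [div_le_one hm0]; exact_mod_cast hjm
      by_cases hcase : y ≤ (j:ℝ)/m
      · exact ih hjm' x y hx hy0 hcase hxy
      push_neg at hcase
      -- y ∈ (j/m, (j+1)/m]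
      have hyloc : y ≤ ((j:ℝ)+1)/m := by push_cast at hyj; exact hyj
      by_cases hxcase : (j:ℝ)/m ≤ x
      · -- both in the same cell: use local formula
        exact aux_cell m hm f K hK0 hK j hjm x y hxcase hyloc hxy
      · push_neg at hxcase
        -- split at node j/m
        have hnode : (j:ℝ)/m ∈ Set.Icc (0:ℝ) 1 := by
          constructor
          · positivity
          · rw [div_le_one hm0]; exact_mod_cast hjm'
        have s1 : |piInterp m f ((j:ℝ)/m) - piInterp m f x| ≤ K * ((j:ℝ)/m - x) :=
          ih hjm' x ((j:ℝ)/m) hx (by positivity) le_rfl (le_of_lt hxcase)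
        have s2 : |piInterp m f y - piInterp m f ((j:ℝ)/m)| ≤ K * (y - (j:ℝ)/m) :=
          aux_cell m hm f K hK0 hK j hjm ((j:ℝ)/m) y le_rfl hyloc (le_of_lt hcase)
        calc |piInterp m f y - piInterp m f x|
            ≤ |piInterp m f y - piInterp m f ((j:ℝ)/m)| +
              |piInterp m f ((j:ℝ)/m) - piInterp m f x| := abs_sub_le _ _ _
          _ ≤ K * (y - (j:ℝ)/m) + K * ((j:ℝ)/m - x) := add_le_add s2 s1
          _ = K * (y - x) := by ring
  intro x hx y hy
  rcases le_total x y with h | h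
  · have hc := claim m le_rfl x y hx hy.1 (by rw [div_self (ne_of_gt hm0)]; exact hy.2) h
    calc |piInterp m f x - piInterp m f y| = |piInterp m f y - piInterp m f x| :=
          abs_sub_comm _ _
      _ ≤ K * (y - x) := hc
      _ = K * |x - y| := by rw [abs_of_nonpos (by linarith : x - y ≤ 0)]; ring
  · have hc := claim m le_rfl y x hy hx.1 (by rw [div_self (ne_of_gt hm0)]; exact hx.2) h
    calc |piInterp m f x - piInterp m f y| ≤ K * (x - y) := hc
      _ = K * |x - y| := by rw [abs_of_nonneg (by linarith : 0 ≤ x - y)]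


/-- with `𝓛_m = Π_m 𝓛 Π_m` and mesh `ε = 1/m`,
`|(𝓛 − 𝓛_m) f|_∞ ≤ 2ε[(α + M) Lip(f) + B₁ |f|_∞] ≤ Γ ε ‖f‖`, where
`Γ = 2 max{α + M, B₁}` and `‖f‖ = Lip(f) + |f|_∞`. -/
theorem stmt_13 (𝓛 : (ℝ → ℝ) →ₗ[ℝ] (ℝ → ℝ)) (α B₁ M : ℝ)
    (hα : 0 < α) (hα1 : α < 1) (hB₁ : 0 ≤ B₁) (hM : 0 < M)
    (h𝓛lip : ∀ f, IsLip f → IsLip (𝓛 f))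
    (hLY : ∀ f, IsLip f → lipC (𝓛 f) ≤ α * lipC f + B₁ * supN f)
    (hbdd : ∀ f, supN (𝓛 f) ≤ M * supN f)
    (m : ℕ) (hm : 1 ≤ m) (f : ℝ → ℝ) (hf : IsLip f) :
    (∀ x ∈ Set.Icc (0:ℝ) 1,
      |𝓛 f x - piInterp m (𝓛 (piInterp m f)) x| ≤
        2 * (1 / (m : ℝ)) * ((α + M) * lipC f + B₁ * supN f)) ∧
    2 * (1 / (m : ℝ)) * ((α + M) * lipC f + B₁ * supN f) ≤
      (2 * max (α + M) B₁) * (1 / (m : ℝ)) * (lipC f + supN f) := by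
  have hm0 : (0:ℝ) < m := by exact_mod_cast hm
  have hm1 : (0:ℝ) ≤ 1/(m:ℝ) := by positivity
  obtain ⟨hL0, hLspec⟩ := aux_lipC_spec f hf
  set L := lipC f with hLdef
  set S := supN f with hSdef
  have hS0 : 0 ≤ S := aux_supN_nonneg f hf
  set g := piInterp m f with hg
  have hglip : ∀ x ∈ Set.Icc (0:ℝ) 1, ∀ y ∈ Set.Icc (0:ℝ) 1,
      |g x - g y| ≤ L * |x - y| := aux_interp_lip m hm f L hL0 hLspec
  have hgIsLip : IsLip g := aux_isLip_of g L hglip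
  have hglipC : lipC g ≤ L := aux_lipC_le g L hL0 hglip
  have hgsupN : supN g ≤ S :=
    aux_supN_le g S (fun x hx =>
      aux_interp_bound m hm f S (fun y hy => aux_le_supN f hf y hy) x hx)
  have herr : ∀ x ∈ Set.Icc (0:ℝ) 1, |f x - g x| ≤ (1/(m:ℝ)) * L :=
    aux_err m hm f L hL0 hLspec
  have hfg : IsLip (f - g) := by
    apply aux_isLip_of (f - g) (L + L)
    intro x hx y hy
    have h1 := hLspec x hx y hy
    have h2 := hglip x hx y hy
    simp only [Pi.sub_apply]
    have e : f x - g x - (f y - g y) = (f x - f y) - (g x - g y) := by ring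
    rw [e]
    calc |(f x - f y) - (g x - g y)| ≤ |f x - f y| + |g x - g y| := by
          rw [sub_eq_add_neg]
          exact (abs_add_le _ _).trans (by rw [abs_neg])
      _ ≤ L * |x - y| + L * |x - y| := add_le_add h1 h2
      _ = (L + L) * |x - y| := by ring
  have hsupfg : supN (f - g) ≤ (1/(m:ℝ)) * L :=
    aux_supN_le _ _ (fun x hx => by simpa using herr x hx)
  have hLfg : IsLip (𝓛 (f - g)) := h𝓛lip _ hfg
  have hLsub : 𝓛 (f - g) = 𝓛 f - 𝓛 g := map_sub 𝓛 f g
  have T1 : ∀ x ∈ Set.Icc (0:ℝ) 1, |𝓛 f x - 𝓛 g x| ≤ M * ((1/(m:ℝ))*L) := by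
    intro x hx
    have h1 : |(𝓛 (f - g)) x| ≤ supN (𝓛 (f - g)) := aux_le_supN _ hLfg x hx
    have h2 : supN (𝓛 (f - g)) ≤ M * supN (f - g) := hbdd _
    have h3 : M * supN (f - g) ≤ M * ((1/(m:ℝ))*L) :=
      mul_le_mul_of_nonneg_left hsupfg hM.le
    have h4 : (𝓛 (f - g)) x = 𝓛 f x - 𝓛 g x := by rw [hLsub]; rfl
    rw [← h4]; linarith
  have hLg : IsLip (𝓛 g) := h𝓛lip g hgIsLip
  obtain ⟨hLg0, hLgspec⟩ := aux_lipC_spec (𝓛 g) hLg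
  have T2 : ∀ x ∈ Set.Icc (0:ℝ) 1,
      |(𝓛 g) x - piInterp m (𝓛 g) x| ≤ (1/(m:ℝ)) * lipC (𝓛 g) :=
    aux_err m hm (𝓛 g) _ hLg0 hLgspec
  have hsg0 : 0 ≤ supN g := aux_supN_nonneg g hgIsLip
  have hlcg0 : 0 ≤ lipC g := (aux_lipC_spec g hgIsLip).1
  have hLY2 : lipC (𝓛 g) ≤ α * L + B₁ * S := by
    have h := hLY g hgIsLip
    nlinarith [hglipC, hgsupN]
  constructor
  · intro x hx
    have t1 := T1 x hx
    have t2 := T2 x hx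
    have tri : |𝓛 f x - piInterp m (𝓛 g) x| ≤
        |𝓛 f x - 𝓛 g x| + |(𝓛 g) x - piInterp m (𝓛 g) x| := abs_sub_le _ _ _
    have h5 : (1/(m:ℝ)) * lipC (𝓛 g) ≤ (1/(m:ℝ))*(α*L+B₁*S) :=
      mul_le_mul_of_nonneg_left hLY2 hm1
    have hA : 0 ≤ (1/(m:ℝ)) * (α * L) := by positivity
    have hB : 0 ≤ (1/(m:ℝ)) * (M * L) := by positivity
    have hC : 0 ≤ (1/(m:ℝ)) * (B₁ * S) := mul_nonneg hm1 (mul_nonneg hB₁ hS0)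
    nlinarith
  · have hmax1 : α + M ≤ max (α + M) B₁ := le_max_left _ _
    have hmax2 : B₁ ≤ max (α + M) B₁ := le_max_right _ _
    have hcomb : (α + M) * L + B₁ * S ≤ max (α + M) B₁ * L + max (α + M) B₁ * S :=
      add_le_add (mul_le_mul_of_nonneg_right hmax1 hL0)
        (mul_le_mul_of_nonneg_right hmax2 hS0)
    nlinarith [mul_le_mul_of_nonneg_left hcomb hm1]
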